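/- The set $\mathbb{N}$ of natural numbers is not a weakly porous subset of $\mathbb{R}$, while $\mathbb{Z}$ is weakly porous in $\mathbb{R}$. In particular, weak porosity is not inherited by subsets. -/

import Mathlib

open MeasureTheory Metric Set

noncomputable section

/-- A half-open interval ("cube") in `ℝ`, given by its left endpoint and length. -/
structure Seg where
  a : ℝ
  l : ℝ
  pos : 0 < l

/-- The set of points of an interval. -/
def Seg.set (P : Seg) : Set ℝ := Set.Ico P.a (P.a + P.l)

/-- `Q` is a dyadic subinterval of `P`. -/
def IsDyadicSubseg (P Q : Seg) : Prop :=
  ∃ j k : ℕ, k < 2 ^ j ∧ Q.l = P.l / 2 ^ j ∧ Q.a = P.a + P.l * k / 2 ^ j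

/-- An interval is `E`-free if it does not meet `E`. -/
def SegFree (E : Set ℝ) (Q : Seg) : Prop := Q.set ∩ E = ∅

/-- The measure `|𝓜(P)|` of a largest `E`-free dyadic subinterval of `P`
(`0` if there is none). -/
def maxFreeR (E : Set ℝ) (P : Seg) : ℝ :=
  sSup {v : ℝ | ∃ Q : Seg, IsDyadicSubseg P Q ∧ SegFree E Q ∧ v = (volume Q.set).toReal}

/-- Weak porosity in `ℝ` with constants `c`, `δ`. -/
def WeaklyPorousWithR (E : Set ℝ) (c δ : ℝ) : Prop :=
  ∀ P : Seg, ∃ (N : ℕ) (Q : Fin N → Seg),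
    (∀ k, IsDyadicSubseg P (Q k) ∧ SegFree E (Q k)) ∧
    (∀ k m, k ≠ m → Disjoint (Q k).set (Q m).set) ∧
    (∀ k, δ * maxFreeR E P ≤ (volume (Q k).set).toReal) ∧
    c * (volume P.set).toReal ≤ ∑ k, (volume (Q k).set).toReal

/-- A subset of `ℝ` is weakly porous. -/
def WeaklyPorousR (E : Set ℝ) : Prop :=
  ∃ c δ : ℝ, 0 < c ∧ c < 1 ∧ 0 < δ ∧ δ < 1 ∧ WeaklyPorousWithR E c δ

/-- A weight on `ℝ`: locally integrable and a.e. positive. -/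
def IsWeightR (w : ℝ → ℝ) : Prop :=
  LocallyIntegrable w volume ∧ ∀ᵐ x : ℝ, 0 < w x

/-- The `A₁` inequality over all intervals, with constant `C`. -/
def A1WithR (w : ℝ → ℝ) (C : ℝ) : Prop :=
  ∀ P : Seg, (⨍ x in P.set, w x) ≤ C * essInf w (volume.restrict P.set)

/-- Membership in `A₁(ℝ)`. -/
def MemA1R (w : ℝ → ℝ) : Prop := IsWeightR w ∧ ∃ C : ℝ, A1WithR w C

/-- The `A_p` inequality over all intervals, with constant `C`. -/
def ApWithR (w : ℝ → ℝ) (p C : ℝ) : Prop :=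
  ∀ P : Seg, (⨍ x in P.set, w x) * (⨍ x in P.set, w x ^ (1 / (1 - p))) ^ (p - 1) ≤ C

/-- Membership in `A_p(ℝ)`. -/
def MemApR (w : ℝ → ℝ) (p : ℝ) : Prop := IsWeightR w ∧ ∃ C : ℝ, ApWithR w p C

/-- `h_E(B(x,R))`: the supremum of radii `t` of balls contained in `B(x,R) \ E`. -/
def hFreeR (E : Set ℝ) (x R : ℝ) : ℝ :=
  sSup {t : ℝ | ∃ y ∈ ball x R, ball y t ⊆ ball x R \ E}

/-- The set of admissible exponents for the Muckenhoupt exponent. -/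
def MuckSetR (E : Set ℝ) : Set ℝ :=
  {α : ℝ | ∃ C : ℝ, ∀ x ∈ E, ∀ R r : ℝ, 0 < r → r < hFreeR E x R → hFreeR E x R ≤ R →
    (volume (thickening r E ∩ ball x R)).toReal ≤
      C * (hFreeR E x R / r) ^ (-α) * (volume (ball x R)).toReal}

open scoped Classical in
/-- The Muckenhoupt exponent of `E ⊆ ℝ`. -/
def MuckExpR (E : Set ℝ) : ℝ :=
  if ∀ x ∈ E, ∀ R : ℝ, 0 < R → 0 < hFreeR E x R then sSup (MuckSetR E) else 0

end

section Helpers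

open MeasureTheory Set

lemma seg_vol (P : Seg) : (volume P.set).toReal = P.l := by
  rw [Seg.set, Real.volume_Ico]
  simp [ENNReal.toReal_ofReal P.pos.le]

lemma dyadic_len {P Q : Seg} (h : IsDyadicSubseg P Q) : Q.l ≤ P.l := by
  obtain ⟨j, k, hk, hl, ha⟩ := h
  rw [hl]
  exact div_le_self P.pos.le (one_le_pow₀ one_le_two)

lemma dyadic_subset {P Q : Seg} (h : IsDyadicSubseg P Q) : Q.set ⊆ P.set := by
  obtain ⟨j, k, hk, hl, ha⟩ := h
  have h2 : (0:ℝ) < 2 ^ j := by positivity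
  apply Set.Ico_subset_Ico
  · rw [ha]; exact le_add_of_nonneg_right (div_nonneg (mul_nonneg P.pos.le (Nat.cast_nonneg k)) h2.le)
  · rw [ha, hl]
    have hk' : (k:ℝ) + 1 ≤ 2 ^ j := by exact_mod_cast Nat.succ_le_of_lt hk
    have hp := P.pos
    have key : P.l * k / 2 ^ j + P.l / 2 ^ j ≤ P.l := by
      rw [← add_div, div_le_iff₀ h2]; nlinarith
    linarith

lemma maxFree_bddAbove (E : Set ℝ) (P : Seg) :
    BddAbove {v : ℝ | ∃ Q : Seg, IsDyadicSubseg P Q ∧ SegFree E Q ∧ v = (volume Q.set).toReal} := by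
  refine ⟨P.l, fun v hv => ?_⟩
  obtain ⟨Q, hQ, _, rfl⟩ := hv
  rw [seg_vol]; exact dyadic_len hQ

end Helpers
section NatPart
open MeasureTheory Set

lemma natFree_left {Q : Seg} (hfree : SegFree {x : ℝ | ∃ m : ℕ, x = (m : ℝ)} Q)
    (hl : 1 < Q.l) : Q.a + Q.l ≤ 0 := by
  by_contra h
  push_neg at h
  rw [SegFree, Set.eq_empty_iff_forall_notMem] at hfree
  rcases le_or_gt Q.a 0 with ha | ha
  · exact hfree 0 ⟨⟨ha, by simpa using h⟩, 0, by norm_num⟩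
  · refine hfree (⌈Q.a⌉ : ℝ) ⟨⟨Int.le_ceil _, ?_⟩, ⟨⌈Q.a⌉.toNat, ?_⟩⟩
    · have := Int.ceil_lt_add_one Q.a
      linarith
    · have := Int.toNat_of_nonneg (Int.ceil_nonneg ha.le)
      exact_mod_cast this.symm

lemma nat_not_weaklyPorous : ¬ WeaklyPorousR {x : ℝ | ∃ m : ℕ, x = (m : ℝ)} := by
  set E : Set ℝ := {x : ℝ | ∃ m : ℕ, x = (m : ℝ)} with hE
  rintro ⟨c, δ, hc, hc1, hδ, hδ1, hW⟩
  obtain ⟨j, hj⟩ : ∃ j : ℕ, (1/2 : ℝ) ^ j < c := exists_pow_lt_of_lt_one hc (by norm_num)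
  have hj' : (1:ℝ) / 2 ^ j < c := by rwa [div_pow, one_pow] at hj
  set s : ℝ := 2 / δ with hs
  have hspos : 0 < s := by positivity
  have h2j : (0:ℝ) < 2 ^ j := by positivity
  set l : ℝ := 2 ^ j * s with hldef
  have hlpos : 0 < l := by positivity
  set P : Seg := ⟨-s, l, hlpos⟩ with hP
  set Q0 : Seg := ⟨-s, s, hspos⟩ with hQ0
  have hdy0 : IsDyadicSubseg P Q0 := by
    refine ⟨j, 0, Nat.two_pow_pos j |>.gt, ?_, ?_⟩ <;>
      simp [hQ0, hP, hldef, mul_div_assoc, mul_div_cancel_left₀ _ h2j.ne']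
  have hfree0 : SegFree E Q0 := by
    rw [SegFree, Set.eq_empty_iff_forall_notMem]
    rintro x ⟨⟨_, hx2⟩, m, rfl⟩
    have : (0:ℝ) ≤ m := Nat.cast_nonneg m
    simp only [hQ0] at hx2
    linarith
  have hM : s ≤ maxFreeR E P := by
    apply le_csSup (maxFree_bddAbove E P)
    exact ⟨Q0, hdy0, hfree0, by rw [seg_vol]⟩
  obtain ⟨N, Q, hQfree, hdisj, hlow, hsum⟩ := hW P
  -- each Q k has length ≥ 2 and is contained in Ico (-s) 0
  have hlen : ∀ k, 2 ≤ (Q k).l := by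
    intro k
    have := hlow k
    rw [seg_vol] at this
    have : δ * s ≤ (Q k).l := le_trans (by nlinarith) this
    rw [hs] at this
    rw [mul_div_cancel₀ _ hδ.ne'] at this
    exact this
  have hsub : ∀ k, (Q k).set ⊆ Set.Ico (-s) 0 := by
    intro k x hx
    have h1 := dyadic_subset (hQfree k).1 hx
    have h2 := natFree_left (hQfree k).2 (by linarith [hlen k])
    obtain ⟨hx1, hx2⟩ := hx
    exact ⟨h1.1, lt_of_lt_of_le hx2 h2⟩
  -- sum of volumes is at most s
  have hmeas : ∀ k, MeasurableSet (Q k).set := fun k => measurableSet_Ico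
  have hvol_ne : ∀ k : Fin N, volume (Q k).set ≠ ⊤ :=
    fun k => (measure_Ico_lt_top).ne
  have hsum_le : ∑ k, (volume (Q k).set).toReal ≤ s := by
    have hU : volume (⋃ k, (Q k).set) = ∑ k, volume (Q k).set := by
      rw [measure_iUnion (fun k m h => hdisj k m h) hmeas, tsum_fintype]
    have hUle : volume (⋃ k, (Q k).set) ≤ volume (Set.Ico (-s) 0) :=
      measure_mono (Set.iUnion_subset hsub)
    have := ENNReal.toReal_mono (by simp [Real.volume_Ico]) hUle
    rw [hU, ENNReal.toReal_sum (fun k _ => hvol_ne k)] at this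
    rw [Real.volume_Ico] at this
    simpa [ENNReal.toReal_ofReal hspos.le] using this
  have hvolP : (volume P.set).toReal = l := seg_vol P
  rw [hvolP] at hsum
  have : c * l ≤ s := le_trans hsum hsum_le
  rw [hldef] at this
  have h1 : 1 / 2 ^ j * (2 ^ j * s) < c * (2 ^ j * s) := by
    apply mul_lt_mul_of_pos_right hj' (by positivity)
  rw [one_div, inv_mul_cancel_left₀ h2j.ne'] at h1
  linarith

end NatPart
section IntPart
open MeasureTheory Set

lemma intFree_len {Q : Seg} (hfree : SegFree {x : ℝ | ∃ m : ℤ, x = (m : ℝ)} Q) :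
    Q.l ≤ 1 := by
  by_contra h
  push_neg at h
  rw [SegFree, Set.eq_empty_iff_forall_notMem] at hfree
  refine hfree (⌈Q.a⌉ : ℝ) ⟨⟨Int.le_ceil _, ?_⟩, ⟨⌈Q.a⌉, rfl⟩⟩
  have := Int.ceil_lt_add_one Q.a
  linarith

lemma int_maxFree_le (P : Seg) :
    maxFreeR {x : ℝ | ∃ m : ℤ, x = (m : ℝ)} P ≤ min P.l 1 := by
  apply Real.sSup_le
  · rintro v ⟨Q, hdy, hfree, rfl⟩
    rw [seg_vol]
    exact le_min (dyadic_len hdy) (intFree_len hfree)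
  · exact le_min P.pos.le one_pos.le

lemma int_weaklyPorous : WeaklyPorousR {x : ℝ | ∃ m : ℤ, x = (m : ℝ)} := by
  classical
  set E : Set ℝ := {x : ℝ | ∃ m : ℤ, x = (m : ℝ)} with hE
  refine ⟨1/2, 1/16, by norm_num, by norm_num, by norm_num, by norm_num, ?_⟩
  intro P
  obtain ⟨a, l, hlpos⟩ := P
  set P : Seg := ⟨a, l, hlpos⟩ with hP
  have hmin : 0 < min l 1 := lt_min hlpos one_pos
  -- choose the dyadic scale
  have hex : ∃ j : ℕ, l / 2 ^ j ≤ min l 1 / 8 := by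
    obtain ⟨j, hj⟩ := pow_unbounded_of_one_lt (8 * l / min l 1) (by norm_num : (1:ℝ) < 2)
    refine ⟨j, ?_⟩
    rw [div_le_div_iff₀ (by positivity) (by norm_num)]
    rw [div_lt_iff₀ hmin] at hj
    nlinarith [pow_pos (show (0:ℝ) < 2 by norm_num) j]
  set j : ℕ := Nat.find hex with hjdef
  have h2j : (0:ℝ) < 2 ^ j := by positivity
  set t : ℝ := l / 2 ^ j with htdef
  have htpos : 0 < t := by positivity
  have htle : t ≤ min l 1 / 8 := Nat.find_spec hex
  have htge : min l 1 / 16 ≤ t := by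
    rcases Nat.eq_zero_or_pos j with hj0 | hj0
    · have : t = l := by rw [htdef, hj0]; norm_num
      rw [this]
      calc min l 1 / 16 ≤ min l 1 := by linarith
        _ ≤ l := min_le_left _ _
    · have hmin' := Nat.find_min hex (Nat.sub_lt hj0 one_pos)
      push_neg at hmin'
      have h2j' : (0:ℝ) < 2 ^ (j-1) := by positivity
      have hpow : (2:ℝ) ^ j = 2 ^ (j-1) * 2 := by
        rw [← pow_succ, Nat.sub_add_cancel hj0]
      have : min l 1 / 8 < l / 2 ^ (j-1) := hmin'
      rw [htdef, hpow]
      rw [div_lt_div_iff₀ (by norm_num) h2j'] at this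
      rw [div_le_div_iff₀ (by norm_num) (by positivity)]
      nlinarith
  -- the tiles
  set tile : ℕ → Seg := fun k => ⟨a + t * k, t, htpos⟩ with htile
  have htiledy : ∀ k < 2 ^ j, IsDyadicSubseg P (tile k) := by
    intro k hk
    refine ⟨j, k, hk, rfl, ?_⟩
    show a + t * k = a + l * k / 2 ^ j
    rw [htdef, div_mul_eq_mul_div]
  have htiles_disj : ∀ k k' : ℕ, k ≠ k' → Disjoint (tile k).set (tile k').set := by
    have key : ∀ k k' : ℕ, k < k' → Disjoint (tile k).set (tile k').set := by
      intro k k' hkk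
      rw [Set.disjoint_left]
      rintro x ⟨hx1, hx2⟩ ⟨hy1, hy2⟩
      simp only [htile, Seg.set] at hx2 hy1
      have : (k:ℝ) + 1 ≤ k' := by exact_mod_cast hkk
      nlinarith
    intro k k' h
    rcases h.lt_or_gt with h | h
    · exact key _ _ h
    · exact (key _ _ h).symm
  set p : ℕ → Prop := fun k => ∀ m : ℤ, (m : ℝ) ∉ (tile k).set with hp
  set S : Finset ℕ := (Finset.range (2 ^ j)).filter p with hS
  set Bd : Finset ℕ := (Finset.range (2 ^ j)).filter (fun k => ¬ p k) with hBd
  have hcards : S.card + Bd.card = 2 ^ j := by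
    rw [hS, hBd, Finset.card_filter_add_card_filter_not, Finset.card_range]
  -- bound the number of bad tiles
  have hBd_le : (Bd.card : ℝ) ≤ l + 1 := by
    have hinj : ∀ k ∈ Bd, (⌈a + t * k⌉ : ℝ) ∈ (tile k).set := by
      intro k hk
      rw [hBd, Finset.mem_filter] at hk
      obtain ⟨hk1, hk2⟩ := hk
      have hk2' : ∃ m : ℤ, (m : ℝ) ∈ (tile k).set := by
        by_contra hno
        push_neg at hno
        exact hk2 hno
      obtain ⟨m, hm1, hm2⟩ := hk2'
      refine ⟨Int.le_ceil _, ?_⟩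
      have : (⌈a + t * k⌉ : ℝ) ≤ m := by
        exact_mod_cast Int.ceil_le.mpr hm1
      simp only [htile] at hm2 ⊢
      linarith
    have hmaps : ∀ k ∈ Bd, ⌈a + t * k⌉ ∈ Finset.Ico ⌈a⌉ ⌈a + l⌉ := by
      intro k hk
      have hmem := hinj k hk
      have hkr : k < 2 ^ j := Finset.mem_range.mp (Finset.mem_filter.mp hk).1
      have hsub := dyadic_subset (htiledy k hkr) hmem
      obtain ⟨h1, h2⟩ := hsub
      rw [Finset.mem_Ico]
      constructor
      · exact Int.ceil_le_ceil (by linarith [Int.le_ceil (a + t * (k:ℝ))] : a ≤ (⌈a + t * (k:ℝ)⌉:ℝ)) |>.trans (le_of_eq (Int.ceil_intCast _))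
      · exact Int.lt_ceil.mpr h2
    have hcard : Bd.card ≤ (Finset.Ico ⌈a⌉ ⌈a + l⌉).card := by
      apply Finset.card_le_card_of_injOn (fun k : ℕ => (⌈a + t * (k:ℝ)⌉ : ℤ)) hmaps
      intro k hk k' hk' heq
      by_contra hne
      have hd := htiles_disj k k' hne
      rw [Set.disjoint_left] at hd
      have heq' : ⌈a + t * (k:ℝ)⌉ = ⌈a + t * (k':ℝ)⌉ := heq
      have h2 := hinj k' hk'
      rw [← heq'] at h2
      exact hd (hinj k hk) h2
    have hicocard : ((Finset.Ico ⌈a⌉ ⌈a + l⌉).card : ℝ) ≤ l + 1 := by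
      rw [Int.card_Ico]
      have h1 : ⌈a⌉ ≤ ⌈a + l⌉ := Int.ceil_le_ceil (by linarith)
      have h2 : ((⌈a + l⌉ - ⌈a⌉).toNat : ℝ) = ((⌈a + l⌉ : ℝ) - (⌈a⌉ : ℝ)) := by
        have h3 := Int.toNat_of_nonneg (show (0:ℤ) ≤ ⌈a + l⌉ - ⌈a⌉ by omega)
        exact_mod_cast congrArg (fun z : ℤ => (z : ℝ)) h3
      rw [h2]
      have := Int.ceil_lt_add_one (a + l)
      have := Int.le_ceil a
      linarith
    calc (Bd.card : ℝ) ≤ ((Finset.Ico ⌈a⌉ ⌈a + l⌉).card : ℝ) := by exact_mod_cast hcard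
      _ ≤ l + 1 := hicocard
  -- assemble the family
  refine ⟨S.card, fun i => tile (S.equivFin.symm i).1, ?_, ?_, ?_, ?_⟩
  · intro i
    have hk : (S.equivFin.symm i).1 ∈ S := (S.equivFin.symm i).2
    have hk1 : (S.equivFin.symm i).1 ∈ Finset.range (2 ^ j) ∧ p (S.equivFin.symm i).1 :=
      Finset.mem_filter.mp hk
    obtain ⟨hk1, hk2⟩ := hk1
    rw [Finset.mem_range] at hk1
    refine ⟨htiledy _ hk1, ?_⟩
    rw [SegFree, Set.eq_empty_iff_forall_notMem]
    rintro x ⟨hx1, m, rfl⟩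
    exact hk2 m hx1
  · intro i i' hii
    apply htiles_disj
    intro h
    exact hii (S.equivFin.symm.injective (Subtype.ext h))
  · intro i
    rw [seg_vol]
    show (1:ℝ)/16 * maxFreeR E P ≤ t
    calc (1:ℝ)/16 * maxFreeR E P ≤ 1/16 * min l 1 := by
          have := int_maxFree_le P
          nlinarith
      _ = min l 1 / 16 := by ring
      _ ≤ t := htge
  · have hvols : ∀ i : Fin S.card, (volume (tile (S.equivFin.symm i).1).set).toReal = t :=
      fun i => seg_vol _
    rw [Finset.sum_congr rfl (fun i _ => hvols i), Finset.sum_const, Finset.card_univ,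
      Fintype.card_fin, nsmul_eq_mul]
    rw [seg_vol]
    show 1/2 * l ≤ (S.card : ℝ) * t
    have hNcast : (S.card : ℝ) = 2 ^ j - Bd.card := by
      have : (S.card : ℝ) + Bd.card = 2 ^ j := by exact_mod_cast hcards
      linarith
    rw [hNcast]
    have hlt : l = 2 ^ j * t := by
      rw [htdef, mul_div_cancel₀ _ h2j.ne']
    have hbt : (Bd.card : ℝ) * t ≤ (l + 1) * t :=
      mul_le_mul_of_nonneg_right hBd_le htpos.le
    have hlmt : (l + 1) * min l 1 ≤ 2 * l := by
      rcases le_total l 1 with h | h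
      · rw [min_eq_left h]; nlinarith
      · rw [min_eq_right h]; nlinarith
    have h8 : (l + 1) * t ≤ l / 4 := by
      have := mul_le_mul_of_nonneg_left htle (by linarith : (0:ℝ) ≤ l + 1)
      calc (l+1) * t ≤ (l+1) * (min l 1 / 8) := this
        _ ≤ l / 4 := by linarith
    nlinarith

end IntPart

/-- `ℤ` is a weakly porous subset of `ℝ`, `ℕ ⊆ ℤ` is not weakly porous;
in particular weak porosity is not inherited by subsets. -/
theorem int_weaklyPorous_nat_not :
    WeaklyPorousR {x : ℝ | ∃ m : ℤ, x = (m : ℝ)} ∧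
    ¬ WeaklyPorousR {x : ℝ | ∃ m : ℕ, x = (m : ℝ)} ∧
    {x : ℝ | ∃ m : ℕ, x = (m : ℝ)} ⊆ {x : ℝ | ∃ m : ℤ, x = (m : ℝ)} := by
  refine ⟨int_weaklyPorous, nat_not_weaklyPorous, ?_⟩
  rintro x ⟨m, rfl⟩
  exact ⟨(m : ℤ), by push_cast; ring⟩
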